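/- For every α ∈ [0,1), a ∈ ℂ, γ ∈ ℝ and E > 0, the denominator D_{α,a,γ}(E) is nonzero and the transmission and reflection coefficients satisfy T_{α,a,γ}(E) + R_{α,a,γ}(E) = 1. -/

import Mathlib

open Filter Set

noncomputable section

lemma Dden_aux (A C m : ℝ) (w : ℂ) (hA : 0 < A) (hm : 0 ≤ m) (hc : 0 < w.re)
    (h : (A:ℂ) * (1 + (m:ℂ)) + Complex.I * (C:ℂ) * w = 0) : False := by
  rw [Complex.ext_iff] at h
  obtain ⟨h2, h1⟩ := h
  simp only [Complex.add_re, Complex.add_im, Complex.mul_re, Complex.mul_im,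
    Complex.I_re, Complex.I_im, Complex.ofReal_re, Complex.ofReal_im,
    Complex.one_re, Complex.one_im, Complex.zero_re, Complex.zero_im] at h1 h2
  ring_nf at h1 h2
  have hC0 : C = 0 := by
    rcases mul_eq_zero.mp (show C * w.re = 0 by linarith) with h | h
    · exact h
    · exact absurd h (ne_of_gt hc)
  rw [hC0] at h2
  nlinarith [h2]

lemma key_normSq (A C : ℝ) (w z : ℂ) (hw : Complex.normSq w = 1) :
    Complex.normSq ((A:ℂ) * (1 + w^2) * (starRingEnd ℂ z))
      + Complex.normSq ((A:ℂ) * (1 - (Complex.normSq z : ℂ) * w^2) + Complex.I * (C:ℂ) * w)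
    = Complex.normSq ((A:ℂ) * (1 + (Complex.normSq z : ℂ)) + Complex.I * (C:ℂ) * w) := by
  have hw' : w.re * w.re + w.im * w.im = 1 := by
    simpa [Complex.normSq_apply] using hw
  simp only [Complex.normSq_apply, Complex.add_re, Complex.add_im, Complex.mul_re,
    Complex.mul_im, Complex.one_re, Complex.one_im, Complex.I_re, Complex.I_im,
    Complex.ofReal_re, Complex.ofReal_im, Complex.sub_re, Complex.sub_im,
    Complex.conj_re, Complex.conj_im, pow_two]
  linear_combination (A^2*(z.re*z.re+z.im*z.im)*(w.re*w.re+w.im*w.im+1)*(1+z.re*z.re+z.im*z.im)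
    - 2*A*(z.re*z.re+z.im*z.im)*C*w.im) * hw'

/-- The denominator `D_{α,a,γ}(E) = E^{(1+α)/2} Γ((1-α)/2)(1+|a|²)
+ i γ 2^{1+α} e^{iπα/2} Γ((3+α)/2)`. -/
def Dden (α : ℝ) (a : ℂ) (γ E : ℝ) : ℂ :=
  ((E ^ ((1 + α) / 2) : ℝ) : ℂ) * ((Real.Gamma ((1 - α) / 2) : ℝ) : ℂ)
      * ((1 + ‖a‖ ^ 2 : ℝ) : ℂ)
    + Complex.I * (γ : ℂ) * (((2 : ℝ) ^ (1 + α) : ℝ) : ℂ)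
      * Complex.exp (Complex.I * (Real.pi : ℂ) * (α : ℂ) / 2)
      * ((Real.Gamma ((3 + α) / 2) : ℝ) : ℂ)

/-- The transmission coefficient
`T_{α,a,γ}(E) = | E^{(1+α)/2}(1+e^{iπα}) Γ((1-α)/2) conj(a) / D_{α,a,γ}(E) |²`. -/
def Tcoef (α : ℝ) (a : ℂ) (γ E : ℝ) : ℝ :=
  ‖((E ^ ((1 + α) / 2) : ℝ) : ℂ)
      * (1 + Complex.exp (Complex.I * (Real.pi : ℂ) * (α : ℂ)))
      * ((Real.Gamma ((1 - α) / 2) : ℝ) : ℂ) * (starRingEnd ℂ a) / Dden α a γ E‖ ^ 2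

/-- The reflection coefficient
`R_{α,a,γ}(E) = | (E^{(1+α)/2} Γ((1-α)/2)(1-|a|² e^{iπα})
+ i γ 2^{1+α} e^{iπα/2} Γ((3+α)/2)) / D_{α,a,γ}(E) |²`. -/
def Rcoef (α : ℝ) (a : ℂ) (γ E : ℝ) : ℝ :=
  ‖(((E ^ ((1 + α) / 2) : ℝ) : ℂ) * ((Real.Gamma ((1 - α) / 2) : ℝ) : ℂ)
      * (1 - ((‖a‖ ^ 2 : ℝ) : ℂ) * Complex.exp (Complex.I * (Real.pi : ℂ) * (α : ℂ)))
    + Complex.I * (γ : ℂ) * (((2 : ℝ) ^ (1 + α) : ℝ) : ℂ)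
      * Complex.exp (Complex.I * (Real.pi : ℂ) * (α : ℂ) / 2)
      * ((Real.Gamma ((3 + α) / 2) : ℝ) : ℂ)) / Dden α a γ E‖ ^ 2

/-- For every `α ∈ [0,1)`, `a ∈ ℂ`, `γ ∈ ℝ`, `E > 0`, the denominator is nonzero and
`T_{α,a,γ}(E) + R_{α,a,γ}(E) = 1`. -/
theorem transmission_plus_reflection_eq_one (α : ℝ) (hα : α ∈ Set.Ico (0 : ℝ) 1)
    (a : ℂ) (γ E : ℝ) (hE : 0 < E) :
    Dden α a γ E ≠ 0 ∧ Tcoef α a γ E + Rcoef α a γ E = 1 := by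
  obtain ⟨hα0, hα1⟩ := hα
  have hnw : Complex.normSq (Complex.exp (Complex.I * (Real.pi : ℂ) * (α : ℂ) / 2)) = 1 := by
    rw [← Complex.sq_norm, Complex.norm_exp]
    simp
  have harg : Complex.I * (Real.pi : ℂ) * (α : ℂ) / 2
      = ((Real.pi * α / 2 : ℝ) : ℂ) * Complex.I := by push_cast; ring
  have hwre : (Complex.exp (Complex.I * (Real.pi : ℂ) * (α : ℂ) / 2)).re
      = Real.cos (Real.pi * α / 2) := by
    rw [harg, Complex.exp_ofReal_mul_I_re]
  have hc : 0 < (Complex.exp (Complex.I * (Real.pi : ℂ) * (α : ℂ) / 2)).re := by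
    rw [hwre]
    apply Real.cos_pos_of_mem_Ioo
    constructor
    · nlinarith [Real.pi_pos]
    · nlinarith [Real.pi_pos]
  have hA : 0 < E ^ ((1 + α) / 2) * Real.Gamma ((1 - α) / 2) :=
    mul_pos (Real.rpow_pos_of_pos hE _) (Real.Gamma_pos_of_pos (by linarith))
  have hm : 0 ≤ Complex.normSq a := Complex.normSq_nonneg a
  have hDden : Dden α a γ E
      = ((E ^ ((1 + α) / 2) * Real.Gamma ((1 - α) / 2) : ℝ) : ℂ)
          * (1 + (Complex.normSq a : ℂ))
        + Complex.I * ((γ * (2:ℝ) ^ (1 + α) * Real.Gamma ((3 + α) / 2) : ℝ) : ℂ)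
          * Complex.exp (Complex.I * (Real.pi : ℂ) * (α : ℂ) / 2) := by
    rw [Dden, ← Complex.sq_norm]
    push_cast
    ring
  have hD : Dden α a γ E ≠ 0 := by
    rw [hDden]
    intro h
    exact Dden_aux _ _ _ _ hA hm hc h
  refine ⟨hD, ?_⟩
  have hw2 : Complex.exp (Complex.I * (Real.pi : ℂ) * (α : ℂ))
      = Complex.exp (Complex.I * (Real.pi : ℂ) * (α : ℂ) / 2) ^ 2 := by
    rw [sq, ← Complex.exp_add]
    ring_nf
  have hTn : ((E ^ ((1 + α) / 2) : ℝ) : ℂ)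
      * (1 + Complex.exp (Complex.I * (Real.pi : ℂ) * (α : ℂ)))
      * ((Real.Gamma ((1 - α) / 2) : ℝ) : ℂ) * (starRingEnd ℂ a)
      = ((E ^ ((1 + α) / 2) * Real.Gamma ((1 - α) / 2) : ℝ) : ℂ)
        * (1 + Complex.exp (Complex.I * (Real.pi : ℂ) * (α : ℂ) / 2) ^ 2)
        * (starRingEnd ℂ a) := by
    rw [hw2]; push_cast; ring
  have hRn : (((E ^ ((1 + α) / 2) : ℝ) : ℂ) * ((Real.Gamma ((1 - α) / 2) : ℝ) : ℂ)
      * (1 - ((‖a‖ ^ 2 : ℝ) : ℂ)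
          * Complex.exp (Complex.I * (Real.pi : ℂ) * (α : ℂ)))
    + Complex.I * (γ : ℂ) * (((2 : ℝ) ^ (1 + α) : ℝ) : ℂ)
      * Complex.exp (Complex.I * (Real.pi : ℂ) * (α : ℂ) / 2)
      * ((Real.Gamma ((3 + α) / 2) : ℝ) : ℂ))
      = ((E ^ ((1 + α) / 2) * Real.Gamma ((1 - α) / 2) : ℝ) : ℂ)
          * (1 - (Complex.normSq a : ℂ)
              * Complex.exp (Complex.I * (Real.pi : ℂ) * (α : ℂ) / 2) ^ 2)
        + Complex.I * ((γ * (2:ℝ) ^ (1 + α) * Real.Gamma ((3 + α) / 2) : ℝ) : ℂ)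
          * Complex.exp (Complex.I * (Real.pi : ℂ) * (α : ℂ) / 2) := by
    rw [hw2, ← Complex.sq_norm]
    push_cast
    ring
  have hDnz : Complex.normSq (Dden α a γ E) ≠ 0 := (Complex.normSq_pos.mpr hD).ne'
  rw [Tcoef, Rcoef, Complex.sq_norm, Complex.sq_norm, Complex.normSq_div, Complex.normSq_div,
    ← add_div, hTn, hRn, hDden,
    key_normSq (E ^ ((1 + α) / 2) * Real.Gamma ((1 - α) / 2))
      (γ * (2:ℝ) ^ (1 + α) * Real.Gamma ((3 + α) / 2))
      (Complex.exp (Complex.I * (Real.pi : ℂ) * (α : ℂ) / 2)) a hnw,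
    ← hDden, div_self hDnz]

end
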